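/- Symmetric leakage bound: for finitely supported random variables v, v̂, d, if I(v̂; d) = 0 then min(I(v; d), I(v; v̂)) ≤ H(v)/2. -/

import Mathlib

open Finset

variable {Ω : Type*} [Fintype Ω]

/-- Probability that random variable `X` takes value `s`, under mass function `μ`. -/
noncomputable def probOf (μ : Ω → ℝ) {S : Type*} [DecidableEq S] (X : Ω → S) (s : S) : ℝ :=
  ∑ ω ∈ Finset.univ.filter fun ω => X ω = s, μ ω

/-- `μ` is a probability mass function on the finite sample space `Ω`. -/
def IsProbMass (μ : Ω → ℝ) : Prop := (∀ ω, 0 ≤ μ ω) ∧ ∑ ω, μ ω = 1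

/-- Shannon entropy of a finitely supported random variable. -/
noncomputable def entropy (μ : Ω → ℝ) {S : Type*} [Fintype S] [DecidableEq S]
    (X : Ω → S) : ℝ :=
  ∑ s : S, Real.negMulLog (probOf μ X s)

/-- Conditional Shannon entropy `H(X | Y) = H(X, Y) - H(Y)`. -/
noncomputable def condEntropy (μ : Ω → ℝ) {S T : Type*} [Fintype S] [DecidableEq S]
    [Fintype T] [DecidableEq T] (X : Ω → S) (Y : Ω → T) : ℝ :=
  entropy μ (fun ω => (X ω, Y ω)) - entropy μ Y

/-- Mutual information `I(X; Y) = H(X) + H(Y) - H(X, Y)`. -/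
noncomputable def mutualInfo (μ : Ω → ℝ) {S T : Type*} [Fintype S] [DecidableEq S]
    [Fintype T] [DecidableEq T] (X : Ω → S) (Y : Ω → T) : ℝ :=
  entropy μ X + entropy μ Y - entropy μ (fun ω => (X ω, Y ω))

/-- Conditional mutual information `I(X; Y | Z) = H(X,Z) + H(Y,Z) - H(X,Y,Z) - H(Z)`. -/
noncomputable def condMutualInfo (μ : Ω → ℝ) {S T U : Type*} [Fintype S] [DecidableEq S]
    [Fintype T] [DecidableEq T] [Fintype U] [DecidableEq U]
    (X : Ω → S) (Y : Ω → T) (Z : Ω → U) : ℝ :=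
  entropy μ (fun ω => (X ω, Z ω)) + entropy μ (fun ω => (Y ω, Z ω))
    - entropy μ (fun ω => (X ω, Y ω, Z ω)) - entropy μ Z

/-- Independence of two random variables: the joint distribution factorizes. -/
def IndepRV (μ : Ω → ℝ) {S T : Type*} [DecidableEq S] [DecidableEq T]
    (X : Ω → S) (Y : Ω → T) : Prop :=
  ∀ s t, probOf μ (fun ω => (X ω, Y ω)) (s, t) = probOf μ X s * probOf μ Y t

section lemmas
variable {μ : Ω → ℝ} {S T U : Type*} [Fintype S] [DecidableEq S] [Fintype T] [DecidableEq T]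
  [Fintype U] [DecidableEq U]

lemma probOf_nonneg (h : ∀ ω, 0 ≤ μ ω) (X : Ω → S) (s : S) : 0 ≤ probOf μ X s :=
  Finset.sum_nonneg fun ω _ => h ω

lemma probOf_eq_sum_ite (X : Ω → S) (s : S) :
    probOf μ X s = ∑ ω, if X ω = s then μ ω else 0 :=
  Finset.sum_filter _ _

lemma sum_probOf (hμ : IsProbMass μ) (X : Ω → S) : ∑ s, probOf μ X s = 1 := by
  rw [← hμ.2]
  exact Finset.sum_fiberwise _ _ _

lemma probOf_snd (X : Ω → S) (Y : Ω → T) (t : T) :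
    probOf μ Y t = ∑ s, probOf μ (fun ω => (X ω, Y ω)) (s, t) := by
  simp only [probOf_eq_sum_ite]
  rw [Finset.sum_comm]
  refine Finset.sum_congr rfl fun ω _ => ?_
  simp [ite_and, Finset.sum_ite_eq]

lemma probOf_fst (X : Ω → S) (Y : Ω → T) (s : S) :
    probOf μ X s = ∑ t, probOf μ (fun ω => (X ω, Y ω)) (s, t) := by
  simp only [probOf_eq_sum_ite]
  rw [Finset.sum_comm]
  refine Finset.sum_congr rfl fun ω _ => ?_
  simp [ite_and, Finset.sum_ite_eq]

end lemmas

section lemmas2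
variable {μ : Ω → ℝ} {S T U : Type*} [Fintype S] [DecidableEq S] [Fintype T] [DecidableEq T]
  [Fintype U] [DecidableEq U]

lemma marg_XZ (X : Ω → S) (Y : Ω → T) (Z : Ω → U) (x : S) (z : U) :
    probOf μ (fun ω => (X ω, Z ω)) (x, z)
      = ∑ y, probOf μ (fun ω => (X ω, Y ω, Z ω)) (x, y, z) := by
  simp only [probOf_eq_sum_ite]
  rw [Finset.sum_comm]
  refine Finset.sum_congr rfl fun ω _ => ?_
  by_cases hx : X ω = x <;> by_cases hz : Z ω = z <;>
    simp [Prod.ext_iff, hx, hz, ite_and, Finset.sum_ite_eq]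

lemma marg_YZ (X : Ω → S) (Y : Ω → T) (Z : Ω → U) (y : T) (z : U) :
    probOf μ (fun ω => (Y ω, Z ω)) (y, z)
      = ∑ x, probOf μ (fun ω => (X ω, Y ω, Z ω)) (x, y, z) := by
  simp only [probOf_eq_sum_ite]
  rw [Finset.sum_comm]
  refine Finset.sum_congr rfl fun ω _ => ?_
  by_cases hy : Y ω = y <;> by_cases hz : Z ω = z <;>
    simp [Prod.ext_iff, hy, hz, ite_and, Finset.sum_ite_eq]

lemma negMulLog_add_le {a b : ℝ} (ha : 0 ≤ a) (hb : 0 ≤ b) :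
    Real.negMulLog (a + b) ≤ Real.negMulLog a + Real.negMulLog b := by
  simp only [Real.negMulLog]
  have h1 : a * Real.log a ≤ a * Real.log (a + b) := by
    rcases eq_or_lt_of_le ha with rfl | ha'
    · simp
    · exact mul_le_mul_of_nonneg_left (Real.log_le_log ha' (by linarith)) ha
  have h2 : b * Real.log b ≤ b * Real.log (a + b) := by
    rcases eq_or_lt_of_le hb with rfl | hb'
    · simp
    · exact mul_le_mul_of_nonneg_left (Real.log_le_log hb' (by linarith)) hb
  nlinarith [h1, h2]

lemma negMulLog_sum_le {ι : Type*} (s : Finset ι) (f : ι → ℝ) (hf : ∀ i ∈ s, 0 ≤ f i) :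
    Real.negMulLog (∑ i ∈ s, f i) ≤ ∑ i ∈ s, Real.negMulLog (f i) := by
  induction s using Finset.cons_induction with
  | empty => simp
  | cons a s ha ih =>
    rw [Finset.sum_cons, Finset.sum_cons]
    calc Real.negMulLog (f a + ∑ i ∈ s, f i)
        ≤ Real.negMulLog (f a) + Real.negMulLog (∑ i ∈ s, f i) :=
          negMulLog_add_le (hf a (Finset.mem_cons_self a s))
            (Finset.sum_nonneg fun i hi => hf i (Finset.mem_cons_of_mem hi))
      _ ≤ _ := by
          have := ih fun i hi => hf i (Finset.mem_cons_of_mem hi)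
          linarith

/-- `H(Y) ≤ H(X,Y)`. -/
lemma entropy_le_entropy_pair (hμ : ∀ ω, 0 ≤ μ ω) (X : Ω → S) (Y : Ω → T) :
    entropy μ Y ≤ entropy μ (fun ω => (X ω, Y ω)) := by
  unfold entropy
  rw [Fintype.sum_prod_type, Finset.sum_comm]
  refine Finset.sum_le_sum fun t _ => ?_
  rw [probOf_snd X Y t]
  exact negMulLog_sum_le _ _ fun s _ => probOf_nonneg hμ _ _

lemma entropy_comp_equiv (X : Ω → S) (e : S ≃ T) :
    entropy μ (fun ω => e (X ω)) = entropy μ X := by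
  unfold entropy
  rw [← Equiv.sum_comp e]
  refine Finset.sum_congr rfl fun s _ => ?_
  congr 1
  unfold probOf
  refine Finset.sum_congr ?_ fun _ _ => rfl
  ext ω
  simp [e.injective.eq_iff]

end lemmas2


lemma key_pointwise {a c d e : ℝ} (ha : 0 ≤ a) (hac : a ≤ c) (had : a ≤ d) (hce : c ≤ e) :
    a - c * d / e ≤ a * Real.log a + a * Real.log e - a * Real.log c - a * Real.log d := by
  rcases eq_or_lt_of_le ha with rfl | ha'
  · have : 0 ≤ c * d / e := div_nonneg (mul_nonneg hac had) (le_trans hac hce)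
    simp; linarith
  · have hc : 0 < c := lt_of_lt_of_le ha' hac
    have hd : 0 < d := lt_of_lt_of_le ha' had
    have he : 0 < e := lt_of_lt_of_le hc hce
    have ht : 0 < c * d / (a * e) := by positivity
    have hlog := Real.log_le_sub_one_of_pos ht
    have hexp : Real.log (c * d / (a * e)) =
        Real.log c + Real.log d - Real.log a - Real.log e := by
      rw [Real.log_div (by positivity) (by positivity), Real.log_mul hc.ne' hd.ne',
        Real.log_mul ha'.ne' he.ne']
      ring
    have hmul : a * (c * d / (a * e)) = c * d / e := by
      field_simp
    nlinarith [mul_le_mul_of_nonneg_left hlog ha]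

section big
variable {μ : Ω → ℝ} {S T U : Type*} [Fintype S] [DecidableEq S] [Fintype T] [DecidableEq T]
  [Fintype U] [DecidableEq U]


lemma sum_rot {A B C : Type*} [Fintype A] [Fintype B] [Fintype C] (f : A → B → C → ℝ) :
    ∑ x : A, ∑ y : B, ∑ z : C, f x y z = ∑ z : C, ∑ x : A, ∑ y : B, f x y z :=
  (Finset.sum_congr rfl fun x _ => Finset.sum_comm).trans Finset.sum_comm

lemma condMutualInfo_nonneg (hμ : IsProbMass μ) (X : Ω → S) (Y : Ω → T) (Z : Ω → U) :
    0 ≤ condMutualInfo μ X Y Z := by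
  set a : S → T → U → ℝ := fun x y z => probOf μ (fun ω => (X ω, Y ω, Z ω)) (x, y, z) with ha_def
  set c : S → U → ℝ := fun x z => probOf μ (fun ω => (X ω, Z ω)) (x, z) with hc_def
  set d : T → U → ℝ := fun y z => probOf μ (fun ω => (Y ω, Z ω)) (y, z) with hd_def
  set e : U → ℝ := fun z => probOf μ Z z with he_def
  have ha : ∀ x y z, 0 ≤ a x y z := fun x y z => probOf_nonneg hμ.1 _ _
  have hc : ∀ x z, c x z = ∑ y, a x y z := fun x z => marg_XZ X Y Z x z
  have hd : ∀ y z, d y z = ∑ x, a x y z := fun y z => marg_YZ X Y Z y z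
  have heX : ∀ z, e z = ∑ x, c x z := fun z => probOf_snd X Z z
  have heY : ∀ z, e z = ∑ y, d y z := fun z => probOf_snd Y Z z
  have hac : ∀ x y z, a x y z ≤ c x z := by
    intro x y z; rw [hc]
    exact Finset.single_le_sum (fun i _ => ha x i z) (mem_univ y)
  have had : ∀ x y z, a x y z ≤ d y z := by
    intro x y z; rw [hd]
    exact Finset.single_le_sum (fun i _ => ha i y z) (mem_univ x)
  have hcpos : ∀ x z, 0 ≤ c x z := fun x z => probOf_nonneg hμ.1 _ _
  have hdpos : ∀ y z, 0 ≤ d y z := fun y z => probOf_nonneg hμ.1 _ _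
  have hce : ∀ x z, c x z ≤ e z := by
    intro x z; rw [heX]
    exact Finset.single_le_sum (fun i _ => hcpos i z) (mem_univ x)
  -- entropy rewrites
  have E3 : entropy μ (fun ω => (X ω, Y ω, Z ω)) = ∑ x, ∑ y, ∑ z, -(a x y z * Real.log (a x y z)) := by
    unfold entropy
    simp only [Fintype.sum_prod_type, Real.negMulLog, neg_mul]
    rfl
  have EXZ : entropy μ (fun ω => (X ω, Z ω)) = ∑ x, ∑ y, ∑ z, -(a x y z * Real.log (c x z)) := by
    unfold entropy
    rw [Fintype.sum_prod_type]
    refine Finset.sum_congr rfl fun x _ => ?_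
    rw [Finset.sum_comm]
    refine Finset.sum_congr rfl fun z _ => ?_
    rw [Real.negMulLog, show probOf μ (fun ω => (X ω, Z ω)) (x, z) = c x z from rfl,
      hc x z, neg_mul, Finset.sum_mul, ← Finset.sum_neg_distrib]
  have EYZ : entropy μ (fun ω => (Y ω, Z ω)) = ∑ x, ∑ y, ∑ z, -(a x y z * Real.log (d y z)) := by
    unfold entropy
    rw [Fintype.sum_prod_type]
    rw [show (∑ x, ∑ y, ∑ z, -(a x y z * Real.log (d y z)))
        = ∑ y, ∑ x, ∑ z, -(a x y z * Real.log (d y z)) from Finset.sum_comm]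
    refine Finset.sum_congr rfl fun y _ => ?_
    rw [Finset.sum_comm]
    refine Finset.sum_congr rfl fun z _ => ?_
    rw [Real.negMulLog, show probOf μ (fun ω => (Y ω, Z ω)) (y, z) = d y z from rfl,
      hd y z, neg_mul, Finset.sum_mul, ← Finset.sum_neg_distrib]
  have EZ : entropy μ Z = ∑ x, ∑ y, ∑ z, -(a x y z * Real.log (e z)) := by
    unfold entropy
    rw [sum_rot (fun x y z => -(a x y z * Real.log (e z)))]
    refine Finset.sum_congr rfl fun z _ => ?_
    rw [Real.negMulLog, show probOf μ Z z = e z from rfl, heX z, neg_mul,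
      Finset.sum_mul, ← Finset.sum_neg_distrib]
    refine Finset.sum_congr rfl fun x _ => ?_
    rw [hc x z, Finset.sum_mul, ← Finset.sum_neg_distrib]
  -- the combined expression
  have comb : condMutualInfo μ X Y Z
      = ∑ x, ∑ y, ∑ z, (a x y z * Real.log (a x y z) + a x y z * Real.log (e z)
          - a x y z * Real.log (c x z) - a x y z * Real.log (d y z)) := by
    unfold condMutualInfo
    rw [E3, EXZ, EYZ, EZ]
    rw [← Finset.sum_add_distrib, ← Finset.sum_sub_distrib, ← Finset.sum_sub_distrib]
    refine Finset.sum_congr rfl fun x _ => ?_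
    rw [← Finset.sum_add_distrib, ← Finset.sum_sub_distrib, ← Finset.sum_sub_distrib]
    refine Finset.sum_congr rfl fun y _ => ?_
    rw [← Finset.sum_add_distrib, ← Finset.sum_sub_distrib, ← Finset.sum_sub_distrib]
    refine Finset.sum_congr rfl fun z _ => ?_
    ring
  -- lower bound by sum of (a - c*d/e)
  have hbound : ∑ x, ∑ y, ∑ z, (a x y z - c x z * d y z / e z) ≤ condMutualInfo μ X Y Z := by
    rw [comb]
    refine Finset.sum_le_sum fun x _ => Finset.sum_le_sum fun y _ => Finset.sum_le_sum fun z _ => ?_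
    exact key_pointwise (ha x y z) (hac x y z) (had x y z) (hce x z)
  -- total masses
  have hsa : ∑ x, ∑ y, ∑ z, a x y z = 1 := by
    have := sum_probOf hμ (fun ω => (X ω, Y ω, Z ω))
    simp only [Fintype.sum_prod_type] at this
    exact this
  have hsb : ∑ x, ∑ y, ∑ z, c x z * d y z / e z ≤ 1 := by
    rw [sum_rot (fun x y z => c x z * d y z / e z)]
    have hepos : ∀ z, 0 ≤ e z := fun z => probOf_nonneg hμ.1 Z z
    have hz : ∀ z, ∑ x, ∑ y, c x z * d y z / e z ≤ e z := by
      intro z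
      have hfac : (∑ x, c x z) * (∑ y, d y z) / e z = ∑ x, ∑ y, c x z * d y z / e z := by
        rw [Finset.sum_mul, Finset.sum_div]
        exact Finset.sum_congr rfl fun x _ => by rw [Finset.mul_sum, Finset.sum_div]
      rw [← hfac, ← heX, ← heY]
      rcases eq_or_lt_of_le (hepos z) with h0 | h0
      · rw [← h0]; simp
      · rw [mul_div_assoc, div_self h0.ne', mul_one]
    calc ∑ z, ∑ x, ∑ y, c x z * d y z / e z ≤ ∑ z, e z := Finset.sum_le_sum fun z _ => hz z
      _ = 1 := sum_probOf hμ Z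
  have hsplit : ∑ x, ∑ y, ∑ z, (a x y z - c x z * d y z / e z)
      = (∑ x, ∑ y, ∑ z, a x y z) - ∑ x, ∑ y, ∑ z, c x z * d y z / e z := by
    simp [Finset.sum_sub_distrib]
  linarith [hbound, hsplit, hsa, hsb]

end big


/-- Rotation equivalence `(a,b,c) ↦ (c,a,b)`. -/
def rotEquiv (A B C : Type*) : (A × B × C) ≃ (C × A × B) where
  toFun x := (x.2.2, x.1, x.2.1)
  invFun x := (x.2.1, x.2.2, x.1)
  left_inv _ := rfl
  right_inv _ := rfl

theorem symmetric_leakage_bound {V VH D : Type*} [Fintype V] [DecidableEq V] [Fintype VH] [DecidableEq VH] [Fintype D] [DecidableEq D] (μ : Ω → ℝ) (hμ : IsProbMass μ) (v : Ω → V) (vh : Ω → VH) (d : Ω → D)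
    (h : mutualInfo μ vh d = 0) :
    min (mutualInfo μ v d) (mutualInfo μ v vh) ≤ entropy μ v / 2 := by
  have h1 : 0 ≤ condMutualInfo μ vh d v := condMutualInfo_nonneg hμ vh d v
  have h2 : entropy μ (fun ω => (vh ω, d ω))
      ≤ entropy μ (fun ω => (v ω, vh ω, d ω)) :=
    entropy_le_entropy_pair hμ.1 v (fun ω => (vh ω, d ω))
  have h3 : entropy μ (fun ω => (v ω, vh ω, d ω))
      = entropy μ (fun ω => (vh ω, d ω, v ω)) :=
    entropy_comp_equiv (fun ω => (vh ω, d ω, v ω)) (rotEquiv VH D V)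
  have h4 : entropy μ (fun ω => (vh ω, v ω)) = entropy μ (fun ω => (v ω, vh ω)) :=
    entropy_comp_equiv (fun ω => (v ω, vh ω)) (Equiv.prodComm V VH)
  have h5 : entropy μ (fun ω => (d ω, v ω)) = entropy μ (fun ω => (v ω, d ω)) :=
    entropy_comp_equiv (fun ω => (v ω, d ω)) (Equiv.prodComm V D)
  unfold mutualInfo at h ⊢
  unfold condMutualInfo at h1
  have hsum : mutualInfo μ v d + mutualInfo μ v vh ≤ entropy μ v := by
    unfold mutualInfo
    linarith [h1, h2, h3, h4, h5, h]
  unfold mutualInfo at hsum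
  rcases le_total (entropy μ v + entropy μ d - entropy μ (fun ω => (v ω, d ω)))
      (entropy μ v + entropy μ vh - entropy μ (fun ω => (v ω, vh ω))) with hle | hle
  · rw [min_eq_left hle]; linarith
  · rw [min_eq_right hle]; linarith
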